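/- Let Q be a unital quantale, (M, A) a Q-enriched category, and let σ₁, σ₂ : A → Q be presingletons (M(a,b)*σᵢ(b) ≤ σᵢ(a)). If for every a ∈ A the homs from the representable presingletons agree, i.e. ⨆{ f ∣ ∀b, M(b,a)*f ≤ σ₁(b) } = ⨆{ f ∣ ∀b, M(b,a)*f ≤ σ₂(b) }, then σ₁ = σ₂. Hence the Q-category of presingletons of (M,A) is skeletal. -/
import Mathlib

/-- The quantale-enriched category of presingletons is skeletal: two presingletons with
the same homs from all representable presingletons are equal. -/
theorem stmt_19 {Q : Type*} [Monoid Q] [CompleteLattice Q] [IsQuantale Q]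
    {A : Type*} (M : A → A → Q)
    (hrefl : ∀ a, (1 : Q) ≤ M a a)
    (htrans : ∀ a b c, M a b * M b c ≤ M a c)
    (σ₁ σ₂ : A → Q)
    (hσ₁ : ∀ a b, M a b * σ₁ b ≤ σ₁ a)
    (hσ₂ : ∀ a b, M a b * σ₂ b ≤ σ₂ a)
    (h : ∀ a : A, sSup {f : Q | ∀ b, M b a * f ≤ σ₁ b}
        = sSup {f : Q | ∀ b, M b a * f ≤ σ₂ b}) :
    σ₁ = σ₂ := by
  have yoneda : ∀ (σ : A → Q), (∀ a b, M a b * σ b ≤ σ a) →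
      ∀ a, sSup {f : Q | ∀ b, M b a * f ≤ σ b} = σ a := by
    intro σ hσ a
    apply le_antisymm
    · apply sSup_le
      intro f hf
      calc f = 1 * f := (one_mul f).symm
        _ ≤ M a a * f := mul_le_mul_left (hrefl a) f
        _ ≤ σ a := hf a
    · exact le_sSup fun b => hσ b a
  funext a
  rw [← yoneda σ₁ hσ₁ a, ← yoneda σ₂ hσ₂ a, h a]
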